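/- Let α and α' be strategy profiles that agree at every coordinate n ≠ k, with α k > 0 and α' k = 0. Then the sign of (φ α − φ α') equals the sign of (c k α − c k α'), where c k is the individual cost of user k (so c k α is the offloading energy of user k and c k α' is its local-computing energy). -/

import Mathlib

set_option maxHeartbeats 1000000


/-- For a unilateral deviation of user `k` from offloading (`α k > 0`) to
local computing (`α' k = 0`), the sign of the potential change equals the sign of the
change in the individual cost of user `k`. -/
theorem ordinal_potential_offload_local
    (K M : ℕ) (B σ2 τ ζ : ℝ)
    (hB : 0 < B) (hσ : 0 < σ2) (hτ : 0 < τ) (hζ : 0 < ζ)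
    (p h I D S : Fin K → ℝ)
    (hp : ∀ k, 0 < p k) (hh : ∀ k, 0 < h k) (hI : ∀ k, 0 < I k)
    (hD : ∀ k, 0 < D k) (hS : ∀ k, 0 < S k)
    (b : Fin K → ℝ) (hb : ∀ k, b k = 0 ∨ b k = 1)
    (w : Fin K → ℝ) (hw : ∀ k, w k = p k * h k)
    (Υ : Fin K → (Fin K → Fin (M + 1)) → ℝ)
    (hΥ : ∀ k α, Υ k α =
      ∑ n ∈ (Finset.univ.erase k).filter (fun n => α n = α k), w n)
    (r : Fin K → (Fin K → Fin (M + 1)) → ℝ)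
    (hr : ∀ k α, r k α = (B / (M : ℝ)) * Real.logb 2 (1 + w k / (Υ k α + σ2)))
    (EL : Fin K → ℝ) (hEL : ∀ k, EL k = ζ * S k ^ 3 / τ ^ 2)
    (EO : Fin K → (Fin K → Fin (M + 1)) → ℝ)
    (hEO : ∀ k α, EO k α = p k * (I k + (1 - b k) * D k) / r k α)
    (c : Fin K → (Fin K → Fin (M + 1)) → ℝ)
    (hc : ∀ k α, c k α = if α k = 0 then EL k else EO k α)
    (V : Fin K → ℝ)
    (hV : ∀ k, V k = w k /
        ((2 : ℝ) ^ (p k * τ ^ 2 * (M : ℝ) * (I k + (1 - b k) * D k) / (B * ζ * S k ^ 3)) - 1)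
      - σ2)
    (φ : (Fin K → Fin (M + 1)) → ℝ)
    (hφ : ∀ α, φ α =
      (1 / 2) * ∑ k : Fin K, ∑ n ∈ Finset.univ.erase k,
          w k * w n * (if α n = α k then (1 : ℝ) else 0) * (if 0 < α k then (1 : ℝ) else 0)
      + ∑ k : Fin K, w k * V k * (if α k = 0 then (1 : ℝ) else 0))
    (k : Fin K) (α α' : Fin K → Fin (M + 1))
    (hagree : ∀ n, n ≠ k → α n = α' n)
    (hk : 0 < α k) (hk' : α' k = 0) :
    Real.sign (φ α - φ α') = Real.sign (c k α - c k α') := by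
  classical
  -- basic positivity facts
  have hwpos : ∀ n, 0 < w n := fun n => by rw [hw]; exact mul_pos (hp n) (hh n)
  have hαk0 : α k ≠ 0 := Fin.pos_iff_ne_zero.mp hk
  have hM : 0 < (M : ℝ) := by
    have h1 : 0 < (α k).val := hk
    have h2 := (α k).isLt
    exact_mod_cast Nat.cast_pos.mpr (by omega : 0 < M)
  have hI' : 0 < I k + (1 - b k) * D k := by
    rcases hb k with hb0 | hb1
    · rw [hb0]; nlinarith [hI k, hD k]
    · rw [hb1]; nlinarith [hI k]
  have hSk := hS k
  have hpk := hp k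
  -- Step 1 : the potential difference
  have hsum1 : (∑ i : Fin K, ∑ n ∈ Finset.univ.erase i,
        w i * w n * (if α n = α i then (1:ℝ) else 0) * (if 0 < α i then (1:ℝ) else 0))
      - (∑ i : Fin K, ∑ n ∈ Finset.univ.erase i,
        w i * w n * (if α' n = α' i then (1:ℝ) else 0) * (if 0 < α' i then (1:ℝ) else 0))
      = 2 * (w k * Υ k α) := by
    rw [← Finset.sum_sub_distrib]
    have hrow : ∀ i : Fin K, i ≠ k →
        (∑ n ∈ Finset.univ.erase i,
          w i * w n * (if α n = α i then (1:ℝ) else 0) * (if 0 < α i then (1:ℝ) else 0))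
        - (∑ n ∈ Finset.univ.erase i,
          w i * w n * (if α' n = α' i then (1:ℝ) else 0) * (if 0 < α' i then (1:ℝ) else 0))
        = (if α i = α k then w i else 0) * w k := by
      intro i hi
      rw [← Finset.sum_sub_distrib]
      rw [Finset.sum_eq_single_of_mem k
        (Finset.mem_erase.mpr ⟨(Ne.symm hi), Finset.mem_univ k⟩)]
      · have hik : α' i = α i := (hagree i hi).symm
        rw [hk', hik]
        have e1 : (if α k = α i then (1:ℝ) else 0) * (if 0 < α i then (1:ℝ) else 0)
            = (if α i = α k then (1:ℝ) else 0) := by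
          by_cases hc : α i = α k
          · rw [if_pos hc.symm, if_pos hc, if_pos (show 0 < α i by rw [hc]; exact hk)]; ring
          · rw [if_neg (fun hx => hc hx.symm), if_neg hc]; ring
        have e2 : (if (0 : Fin (M+1)) = α i then (1:ℝ) else 0) * (if 0 < α i then (1:ℝ) else 0)
            = 0 := by
          by_cases hc : (0 : Fin (M+1)) = α i
          · rw [if_neg (show ¬ 0 < α i from by rw [← hc]; exact lt_irrefl _)]; ring
          · rw [if_neg hc]; ring
        rw [mul_assoc (w i * w k), e1, mul_assoc (w i * w k), e2, mul_zero, sub_zero]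
        by_cases hc : α i = α k
        · rw [if_pos hc, if_pos hc]; ring
        · rw [if_neg hc, if_neg hc]; ring
      · intro n hn hnk
        have hni : n ≠ i := (Finset.mem_erase.mp hn).1
        rw [hagree n hnk, hagree i hi]
        ring
    rw [← Finset.sum_erase_add _ _ (Finset.mem_univ k)]
    have hkrow : (∑ n ∈ Finset.univ.erase k,
          w k * w n * (if α n = α k then (1:ℝ) else 0) * (if 0 < α k then (1:ℝ) else 0))
        - (∑ n ∈ Finset.univ.erase k,
          w k * w n * (if α' n = α' k then (1:ℝ) else 0) * (if 0 < α' k then (1:ℝ) else 0))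
        = w k * Υ k α := by
      have h2 : (∑ n ∈ Finset.univ.erase k,
          w k * w n * (if α' n = α' k then (1:ℝ) else 0) * (if 0 < α' k then (1:ℝ) else 0)) = 0 := by
        apply Finset.sum_eq_zero
        intro n _
        have : ¬ (0 < α' k) := by rw [hk']; exact lt_irrefl _
        rw [if_neg this]; ring
      rw [h2, sub_zero, hΥ, Finset.sum_filter, Finset.mul_sum]
      apply Finset.sum_congr rfl
      intro n _
      by_cases hcase : α n = α k
      · simp [hcase, hk]
      · simp [hcase]
    rw [Finset.sum_congr rfl (fun i hi => hrow i (Finset.mem_erase.mp hi).1), hkrow]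
    have hthis : (∑ i ∈ Finset.univ.erase k, (if α i = α k then w i else 0) * w k)
        = w k * Υ k α := by
      rw [hΥ, Finset.sum_filter, Finset.mul_sum]
      apply Finset.sum_congr rfl
      intro n _
      by_cases hcase : α n = α k
      · rw [if_pos hcase]; ring
      · rw [if_neg hcase]; ring
    rw [hthis]; ring
  have hsum2 : (∑ i : Fin K, w i * V i * (if α i = 0 then (1:ℝ) else 0))
      - (∑ i : Fin K, w i * V i * (if α' i = 0 then (1:ℝ) else 0))
      = -(w k * V k) := by
    rw [← Finset.sum_sub_distrib]
    rw [Finset.sum_eq_single_of_mem k (Finset.mem_univ k)]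
    · rw [if_neg hαk0, if_pos hk']; ring
    · intro n _ hn
      rw [hagree n hn]; ring
  have hφdiff : φ α - φ α' = w k * (Υ k α - V k) := by
    rw [hφ, hφ]
    linarith [hsum1, hsum2]
  -- Step 2 : the cost difference
  have hcdiff : c k α - c k α' = EO k α - EL k := by
    rw [hc, hc, hk', if_neg hαk0, if_pos rfl]
  -- Step 3 : the analytic equivalences
  have hΥnn : 0 ≤ Υ k α := by
    rw [hΥ]; exact Finset.sum_nonneg fun n _ => (hwpos n).le
  have hYσ : 0 < Υ k α + σ2 := by linarith
  set A : ℝ := p k * τ ^ 2 * (M : ℝ) * (I k + (1 - b k) * D k) / (B * ζ * S k ^ 3) with hA_def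
  have hA : 0 < A := by rw [hA_def]; positivity
  have h2A : (1:ℝ) < (2:ℝ) ^ A :=
    (Real.one_lt_rpow_iff_of_pos (by norm_num)).mpr (Or.inl ⟨by norm_num, hA⟩)
  have hE : 0 < (2:ℝ) ^ A - 1 := by linarith
  have hX1 : (1:ℝ) < 1 + w k / (Υ k α + σ2) := by
    have : 0 < w k / (Υ k α + σ2) := div_pos (hwpos k) hYσ
    linarith
  have hX0 : (0:ℝ) < 1 + w k / (Υ k α + σ2) := by linarith
  have hL : 0 < Real.logb 2 (1 + w k / (Υ k α + σ2)) := Real.logb_pos (by norm_num) hX1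
  have hrpos : 0 < r k α := by
    rw [hr]; exact mul_pos (div_pos hB hM) hL
  have hζS : (0:ℝ) < ζ * S k ^ 3 := by positivity
  have hτ2 : (0:ℝ) < τ ^ 2 := by positivity
  have hRA : (B / (M:ℝ)) * A = p k * (I k + (1 - b k) * D k) * τ ^ 2 / (ζ * S k ^ 3) := by
    rw [hA_def]; field_simp
  -- V k < Υ k α ↔ EL k < EO k α
  have key_lt : V k < Υ k α ↔ EL k < EO k α := by
    rw [hV, hEL, hEO, ← hA_def]
    rw [sub_lt_iff_lt_add, div_lt_iff₀ hE, div_lt_div_iff₀ hτ2 hrpos]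
    constructor
    · intro hlt
      have h1 : w k / (Υ k α + σ2) < (2:ℝ) ^ A - 1 := (div_lt_iff₀ hYσ).mpr (by linarith [hlt])
      have h2 : 1 + w k / (Υ k α + σ2) < (2:ℝ) ^ A := by linarith
      have h3 : Real.logb 2 (1 + w k / (Υ k α + σ2)) < A :=
        (Real.logb_lt_iff_lt_rpow (by norm_num) hX0).mpr h2
      have h4 : r k α < (B / (M:ℝ)) * A := by
        rw [hr]; exact (mul_lt_mul_iff_right₀ (div_pos hB hM)).mpr h3
      rw [hRA] at h4
      have h5 : r k α * (ζ * S k ^ 3) < p k * (I k + (1 - b k) * D k) * τ ^ 2 := by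
        rw [lt_div_iff₀ hζS] at h4
        linarith
      nlinarith
    · intro hlt
      have h5 : r k α * (ζ * S k ^ 3) < p k * (I k + (1 - b k) * D k) * τ ^ 2 := by nlinarith
      have h4 : r k α < (B / (M:ℝ)) * A := by
        rw [hRA, lt_div_iff₀ hζS]; linarith
      rw [hr] at h4
      have h3 : Real.logb 2 (1 + w k / (Υ k α + σ2)) < A :=
        lt_of_mul_lt_mul_left h4 (div_pos hB hM).le
      have h2 : 1 + w k / (Υ k α + σ2) < (2:ℝ) ^ A :=
        (Real.logb_lt_iff_lt_rpow (by norm_num) hX0).mp h3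
      have h1 : w k / (Υ k α + σ2) < (2:ℝ) ^ A - 1 := by linarith
      have := (div_lt_iff₀ hYσ).mp h1
      linarith
  have key_gt : Υ k α < V k ↔ EO k α < EL k := by
    rw [hV, hEL, hEO, ← hA_def]
    rw [lt_sub_iff_add_lt, lt_div_iff₀ hE, div_lt_div_iff₀ hrpos hτ2]
    constructor
    · intro hlt
      have h1 : (2:ℝ) ^ A - 1 < w k / (Υ k α + σ2) := (lt_div_iff₀ hYσ).mpr (by linarith)
      have h2 : (2:ℝ) ^ A < 1 + w k / (Υ k α + σ2) := by linarith
      have h3 : A < Real.logb 2 (1 + w k / (Υ k α + σ2)) :=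
        (Real.lt_logb_iff_rpow_lt (by norm_num) hX0).mpr h2
      have h4 : (B / (M:ℝ)) * A < r k α := by
        rw [hr]; exact (mul_lt_mul_iff_right₀ (div_pos hB hM)).mpr h3
      rw [hRA] at h4
      have h5 : p k * (I k + (1 - b k) * D k) * τ ^ 2 < r k α * (ζ * S k ^ 3) := by
        rw [div_lt_iff₀ hζS] at h4
        linarith
      nlinarith
    · intro hlt
      have h5 : p k * (I k + (1 - b k) * D k) * τ ^ 2 < r k α * (ζ * S k ^ 3) := by nlinarith
      have h4 : (B / (M:ℝ)) * A < r k α := by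
        rw [hRA, div_lt_iff₀ hζS]; linarith
      rw [hr] at h4
      have h3 : A < Real.logb 2 (1 + w k / (Υ k α + σ2)) :=
        lt_of_mul_lt_mul_left h4 (div_pos hB hM).le
      have h2 : (2:ℝ) ^ A < 1 + w k / (Υ k α + σ2) :=
        (Real.lt_logb_iff_rpow_lt (by norm_num) hX0).mp h3
      have h1 : (2:ℝ) ^ A - 1 < w k / (Υ k α + σ2) := by linarith
      have := (lt_div_iff₀ hYσ).mp h1
      linarith
  -- conclude
  rw [hφdiff, hcdiff]
  rcases lt_trichotomy (Υ k α) (V k) with hcmp | hcmp | hcmp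
  · have h1 : w k * (Υ k α - V k) < 0 := by nlinarith [hwpos k]
    have h2 : EO k α - EL k < 0 := by linarith [key_gt.mp hcmp]
    rw [Real.sign_of_neg h1, Real.sign_of_neg h2]
  · have h1 : w k * (Υ k α - V k) = 0 := by rw [hcmp]; ring
    have h2 : EO k α - EL k = 0 := by
      have hnlt1 : ¬ EO k α < EL k := fun hcon =>
        absurd (key_gt.mpr hcon) (by rw [hcmp]; exact lt_irrefl _)
      have hnlt2 : ¬ EL k < EO k α := fun hcon =>
        absurd (key_lt.mpr hcon) (by rw [hcmp]; exact lt_irrefl _)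
      have := le_antisymm (not_lt.mp hnlt2) (not_lt.mp hnlt1)
      linarith
    rw [h1, h2]
  · have h1 : 0 < w k * (Υ k α - V k) := by nlinarith [hwpos k]
    have h2 : 0 < EO k α - EL k := by linarith [key_lt.mp hcmp]
    rw [Real.sign_of_pos h1, Real.sign_of_pos h2]
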